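/- Let M be a matroid with weight functions w₁, w₂, and let Q = [a, b] ⊆ [0,1] be an interval such that for every λ in the open interval (a,b) and every pair i, j ∈ E with (w₁(i),w₂(i)) ≠ (w₁(j),w₂(j)), the scalarized weights w^{(λ)}(i) and w^{(λ)}(j) are never equal. Then any base minimizing w^{(c)} for some c ∈ (a,b) also minimizes w^{(λ)} for every λ ∈ [a,b]. -/

import Mathlib

open Set

section Aux

variable {α : Type*}

lemma my_finsum_eq [Fintype α] (w : α → ℝ) (s : Set α) :
    ∑ᶠ i ∈ s, w i = ∑ i ∈ (Set.toFinite s).toFinset, w i := by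
  conv_lhs => rw [← Set.Finite.coe_toFinset (Set.toFinite s), finsum_mem_coe_finset]

lemma my_sum_exchange [Fintype α] (w : α → ℝ) (s : Set α) {e f : α}
    (he : e ∈ s) (hf : f ∉ s) :
    ∑ᶠ i ∈ insert f (s \ {e}), w i = (∑ᶠ i ∈ s, w i) - w e + w f := by
  classical
  rw [my_finsum_eq, my_finsum_eq]
  have h1 : (Set.toFinite (insert f (s \ {e}))).toFinset
      = insert f (((Set.toFinite s).toFinset).erase e) := by
    ext i
    simp only [Set.Finite.mem_toFinset, Set.mem_insert_iff, Set.mem_diff,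
      Set.mem_singleton_iff, Finset.mem_insert, Finset.mem_erase]
    tauto
  have hfe : f ∉ ((Set.toFinite s).toFinset).erase e := by
    simp only [Finset.mem_erase, Set.Finite.mem_toFinset]
    exact fun h => hf h.2
  rw [h1, Finset.sum_insert hfe,
    Finset.sum_erase_eq_sub (by simpa [Set.Finite.mem_toFinset] using he)]
  ring

/-- Symmetric exchange for matroid bases. -/
lemma my_symm_exchange [Fintype α] {M : Matroid α} {x y : Set α}
    (hx : M.IsBase x) (hy : M.IsBase y) {f : α} (hfx : f ∈ x) (hfy : f ∉ y) :
    ∃ e, e ∈ y ∧ e ∉ x ∧ M.IsBase (insert e (x \ {f})) ∧ M.IsBase (insert f (y \ {e})) := by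
  classical
  have hfE : f ∈ M.E := hx.subset_ground hfx
  -- a minimal subset J of y whose closure contains f
  have hTfin : {J : Set α | J ⊆ y ∧ f ∈ M.closure J}.Finite := Set.toFinite _
  have hTne : {J : Set α | J ⊆ y ∧ f ∈ M.closure J}.Nonempty :=
    ⟨y, Subset.rfl, by rw [hy.closure_eq]; exact hfE⟩
  obtain ⟨J, ⟨hJy, hfJ⟩, hmin'⟩ := hTfin.exists_minimal hTne
  have hmin : ∀ J' ∈ {J : Set α | J ⊆ y ∧ f ∈ M.closure J}, J' ⊆ J → J = J' :=
    fun J' h1 h2 => (h2.antisymm (hmin' h1 h2)).symm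
  have hminJ : ∀ e ∈ J, f ∉ M.closure (J \ {e}) := by
    intro e heJ hfcl
    have h1 : J \ {e} ∈ {J : Set α | J ⊆ y ∧ f ∈ M.closure J} :=
      ⟨(diff_subset).trans hJy, hfcl⟩
    have h2 : J = J \ {e} := hmin _ h1 diff_subset
    exact (h2 ▸ heJ : e ∈ J \ {e}).2 rfl
  have hI : M.Indep (x \ {f}) := hx.indep.subset diff_subset
  have hfcl : f ∉ M.closure (x \ {f}) := hx.indep.notMem_closure_diff_of_mem hfx
  -- find e ∈ J outside the closure of x \ {f}
  have hex : ∃ e ∈ J, e ∉ M.closure (x \ {f}) := by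
    by_contra h
    push_neg at h
    exact hfcl (M.closure_subset_closure_of_subset_closure h hfJ)
  obtain ⟨e, heJ, hecl⟩ := hex
  have hey : e ∈ y := hJy heJ
  have hef : e ≠ f := fun h => hfy (h ▸ hey)
  have hexx : e ∉ x := by
    intro hex'
    exact hecl (M.subset_closure (x \ {f}) ((diff_subset).trans hx.subset_ground)
      ⟨hex', hef⟩)
  have heE : e ∈ M.E := hy.subset_ground hey
  -- first base
  have hind1 : M.Indep (insert e (x \ {f})) := by
    rw [hI.insert_indep_iff_of_notMem (fun h => hexx h.1)]
    exact ⟨heE, hecl⟩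
  have hB1 : M.IsBase (insert e (x \ {f})) := hx.exchange_isBase_of_indep hexx hind1
  -- second base
  have hfJe : f ∉ M.closure (J \ {e}) := hminJ e heJ
  have hclex : e ∈ M.closure (insert f (J \ {e})) := by
    have h1 : f ∈ M.closure (insert e (J \ {e})) \ M.closure (J \ {e}) := by
      refine ⟨?_, hfJe⟩
      rw [Set.insert_diff_singleton]
      exact M.closure_subset_closure (subset_insert _ _) hfJ
    exact (Matroid.closure_exchange h1).1
  have hfycl : f ∉ M.closure (y \ {e}) := by
    intro hf'
    have h2 : M.closure (insert f (y \ {e})) = M.closure (y \ {e}) :=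
      Matroid.closure_insert_eq_of_mem_closure hf'
    have h3 : e ∈ M.closure (y \ {e}) := by
      have : e ∈ M.closure (insert f (y \ {e})) :=
        M.closure_subset_closure
          (insert_subset_insert (diff_subset_diff_left hJy)) hclex
      rwa [h2] at this
    exact hy.indep.notMem_closure_diff_of_mem hey h3
  have hind2 : M.Indep (insert f (y \ {e})) := by
    rw [(hy.indep.subset diff_subset).insert_indep_iff_of_notMem
      (fun h => hfy h.1)]
    exact ⟨hfE, hfycl⟩
  exact ⟨e, hey, hexx, hB1, hy.exchange_isBase_of_indep hfy hind2⟩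

/-- A base satisfying the local exchange optimality condition is globally optimal. -/
lemma my_local_to_global [Fintype α] {M : Matroid α} (w : α → ℝ) {x : Set α}
    (hx : M.IsBase x)
    (hloc : ∀ f ∈ x, ∀ e, e ∉ x → M.IsBase (insert e (x \ {f})) → w f ≤ w e) :
    ∀ y, M.IsBase y → (∑ᶠ i ∈ x, w i) ≤ ∑ᶠ i ∈ y, w i := by
  classical
  have key : ∀ n (y : Set α), M.IsBase y → (x \ y).ncard = n →
      (∑ᶠ i ∈ x, w i) ≤ ∑ᶠ i ∈ y, w i := by
    intro n
    induction n using Nat.strong_induction_on with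
    | _ n ih =>
      intro y hy hn
      by_cases hxy : x ⊆ y
      · rw [hx.eq_of_subset_isBase hy hxy]
      · obtain ⟨f, hfx, hfy⟩ := not_subset.mp hxy
        obtain ⟨e, hey, hexx, hB1, hB2⟩ := my_symm_exchange hx hy hfx hfy
        have hwfe : w f ≤ w e := hloc f hfx e hexx hB1
        set y' := insert f (y \ {e}) with hy'def
        have hset : x \ y' = (x \ y) \ {f} := by
          ext i
          have hie : i ∈ x → i ≠ e := fun h1 h2 => hexx (h2 ▸ h1)
          simp only [hy'def, Set.mem_diff, Set.mem_insert_iff,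
            Set.mem_singleton_iff, not_or]
          tauto
        have hlt : (x \ y').ncard < n := by
          rw [hset, ← hn]
          exact Set.ncard_diff_singleton_lt_of_mem ⟨hfx, hfy⟩ (Set.toFinite _)
        have h1 : (∑ᶠ i ∈ x, w i) ≤ ∑ᶠ i ∈ y', w i := ih _ hlt y' hB2 rfl
        have h2 : ∑ᶠ i ∈ y', w i = (∑ᶠ i ∈ y, w i) - w e + w f :=
          my_sum_exchange w y hey hfy
        linarith
  intro y hy
  exact key _ y hy rfl

/-- If two elements are weakly ordered at one interior point and never tie inside `(a,b)`
unless their weight vectors agree, the order persists on `[a,b]`. -/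
lemma my_order_persists {a b c : ℝ} (hc : c ∈ Set.Ioo a b) {w₁ w₂ : α → ℝ}
    (hsep : ∀ lam ∈ Set.Ioo a b, ∀ i j : α, (w₁ i, w₂ i) ≠ (w₁ j, w₂ j) →
      (1 - lam) * w₁ i + lam * w₂ i ≠ (1 - lam) * w₁ j + lam * w₂ j)
    {u v : α} (h : (1 - c) * w₁ u + c * w₂ u ≤ (1 - c) * w₁ v + c * w₂ v)
    {lam : ℝ} (hlam : lam ∈ Set.Icc a b) :
    (1 - lam) * w₁ u + lam * w₂ u ≤ (1 - lam) * w₁ v + lam * w₂ v := by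
  by_cases hvec : (w₁ u, w₂ u) = (w₁ v, w₂ v)
  · have h1 : w₁ u = w₁ v := congrArg Prod.fst hvec
    have h2 : w₂ u = w₂ v := congrArg Prod.snd hvec
    rw [h1, h2]
  · set g : ℝ → ℝ := fun t => ((1 - t) * w₁ v + t * w₂ v) -
      ((1 - t) * w₁ u + t * w₂ u) with hg
    have hcont : Continuous g := by fun_prop
    have hgc0 : g c ≠ 0 := by
      intro h0
      exact hsep c hc u v hvec (by simp only [hg] at h0; linarith)
    have hgc : 0 < g c := lt_of_le_of_ne (by simp only [hg]; linarith) (Ne.symm hgc0)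
    by_contra hlt
    push_neg at hlt
    have hglam : g lam < 0 := by simp only [hg]; linarith
    rcases lt_or_ge lam c with hlc | hcl
    · obtain ⟨t, ht, hgt⟩ := intermediate_value_Ioo hlc.le hcont.continuousOn
        (Set.mem_Ioo.mpr ⟨hglam, hgc⟩)
      have htab : t ∈ Set.Ioo a b := ⟨lt_of_le_of_lt hlam.1 ht.1, lt_trans ht.2 hc.2⟩
      exact hsep t htab u v hvec (by simp only [hg] at hgt; linarith)
    · have hcl' : c < lam := by
        rcases lt_or_eq_of_le hcl with h' | h'
        · exact h'
        · exact absurd h' (fun h'' => by rw [← h''] at hglam; linarith)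
      obtain ⟨t, ht, hgt⟩ := intermediate_value_Ioo' hcl'.le hcont.continuousOn
        (Set.mem_Ioo.mpr ⟨hglam, hgc⟩)
      have htab : t ∈ Set.Ioo a b := ⟨lt_trans hc.1 ht.1, lt_of_lt_of_le ht.2 hlam.2⟩
      exact hsep t htab u v hvec (by simp only [hg] at hgt; linarith)

end Aux

/-- if inside the open interval `(a,b)` no two elements with distinct weight
vectors ever have equal scalarized weight, then a base minimizing `w^{(c)}` for some
`c ∈ (a,b)` minimizes `w^{(λ)}` for every `λ ∈ [a,b]`. -/
theorem interior_optimum_optimal_on_closure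
    {α : Type*} [Fintype α] (M : Matroid α) (w₁ w₂ : α → ℝ)
    (a b : ℝ) (hab : a < b) (ha : 0 ≤ a) (hb : b ≤ 1)
    (hsep : ∀ lam ∈ Set.Ioo a b, ∀ i j : α, (w₁ i, w₂ i) ≠ (w₁ j, w₂ j) →
      (1 - lam) * w₁ i + lam * w₂ i ≠ (1 - lam) * w₁ j + lam * w₂ j)
    (c : ℝ) (hc : c ∈ Set.Ioo a b)
    (x : Set α) (hx : M.IsBase x)
    (hxmin : ∀ y : Set α, M.IsBase y →
      (∑ᶠ e ∈ x, ((1 - c) * w₁ e + c * w₂ e)) ≤ ∑ᶠ e ∈ y, ((1 - c) * w₁ e + c * w₂ e)) :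
    ∀ lam ∈ Set.Icc a b, ∀ y : Set α, M.IsBase y →
      (∑ᶠ e ∈ x, ((1 - lam) * w₁ e + lam * w₂ e)) ≤
        ∑ᶠ e ∈ y, ((1 - lam) * w₁ e + lam * w₂ e) := by
  intro lam hlam y hy
  have hloc : ∀ f ∈ x, ∀ e, e ∉ x → M.IsBase (insert e (x \ {f})) →
      (1 - c) * w₁ f + c * w₂ f ≤ (1 - c) * w₁ e + c * w₂ e := by
    intro f hfx e hexx hB
    have h1 := hxmin _ hB
    rw [my_sum_exchange (fun i => (1 - c) * w₁ i + c * w₂ i) x hfx hexx] at h1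
    linarith
  have hloclam : ∀ f ∈ x, ∀ e, e ∉ x → M.IsBase (insert e (x \ {f})) →
      (1 - lam) * w₁ f + lam * w₂ f ≤ (1 - lam) * w₁ e + lam * w₂ e :=
    fun f hf e he hB => my_order_persists hc hsep (hloc f hf e he hB) hlam
  exact my_local_to_global (fun i => (1 - lam) * w₁ i + lam * w₂ i) hx hloclam y hy
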